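/- Resonance lower bound away from the characteristic angles: Let 0 < c < 1 and define θ₀^+, θ₀^− ∈ (0,π) by cos θ₀^± = ±c. There exists a constant c' = c'(c) > 0 such that the following holds. Let ξ₁, ξ₂ ∈ ℝ³ with ξ₁ ≠ 0 and ξ := ξ₁ + ξ₂ ≠ 0, τ₁, τ₂ ∈ ℝ, τ := τ₁ + τ₂, and let N₀, N₁, N₂ ≥ 1 satisfy |ξ| ≤ 2N₀, |ξ₁| ≥ N₁/2 and N₁ ≥ ((1−c)/(8(1+c)))N₂. Suppose A satisfies 2^{20}(1−c)^{−2} < A ≤ 2⁵(1−c)^{−1/2}(N₁N₂)^{1/2}/N₀, and that both |∠(ξ,ξ₁) − θ₀^+| > 2^{10}(1−c)^{−1}A^{−3/4} and |∠(ξ,ξ₁) − θ₀^−| > 2^{10}(1−c)^{−1}A^{−3/4}. Then for either sign ±: max(⟨τ ± c|ξ|⟩, ⟨τ₁ − |ξ₁|⟩, ⟨τ₂ + |ξ₂|⟩) ≥ c' A^{−3/4} |ξ|. -/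

import Mathlib

noncomputable section

open MeasureTheory Real ENNReal
open scoped NNReal


abbrev Sp3 := EuclideanSpace ℝ (Fin 3)

/-- Japanese bracket `⟨r⟩ = (1 + r²)^{1/2}`. -/
def jb (r : ℝ) : ℝ := Real.sqrt (1 + r ^ 2)

/-- Space-time Fourier transform on `ℝ³ × ℝ`. -/
def ftST (u : Sp3 × ℝ → ℂ) (p : Sp3 × ℝ) : ℂ :=
  ∫ q : Sp3 × ℝ, Complex.exp (-Complex.I * (((inner ℝ q.1 p.1 : ℝ) + q.2 * p.2 : ℝ) : ℂ)) * u q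

/-- Inverse space-time Fourier transform on `ℝ³ × ℝ`. -/
def ftSTinv (u : Sp3 × ℝ → ℂ) (q : Sp3 × ℝ) : ℂ :=
  (((2 * Real.pi) ^ (4 : ℕ) : ℝ) : ℂ)⁻¹ *
    ∫ p : Sp3 × ℝ, Complex.exp (Complex.I * (((inner ℝ q.1 p.1 : ℝ) + q.2 * p.2 : ℝ) : ℂ)) * u p

/-- `X^{s,b}`-type norm with sign `σ` and propagation speed `c` (wave case: `c = 1`). -/
def Xnorm (σ c s b : ℝ) (u : Sp3 × ℝ → ℂ) : ℝ≥0∞ :=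
  (∫⁻ p : Sp3 × ℝ,
      ENNReal.ofReal
        (jb ‖p.1‖ ^ (2 * s) * jb (p.2 + σ * c * ‖p.1‖) ^ (2 * b) * ‖ftST u p‖ ^ 2)) ^ (1 / 2 : ℝ)

/-- Dyadic frequency-modulation block `K^{σ,c}_{N,L}`. -/
def Kset (σ c N L : ℝ) : Set (Sp3 × ℝ) :=
  {p | N ≤ jb ‖p.1‖ ∧ jb ‖p.1‖ ≤ 2 * N ∧ L ≤ jb (p.2 + σ * c * ‖p.1‖) ∧
    jb (p.2 + σ * c * ‖p.1‖) ≤ 2 * L}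

/-- Space-time Fourier projection onto the set `K`. -/
def Pproj (K : Set (Sp3 × ℝ)) (u : Sp3 × ℝ → ℂ) : Sp3 × ℝ → ℂ :=
  ftSTinv (K.indicator (ftST u))

def IsDyadic (N : ℝ) : Prop := ∃ k : ℕ, N = 2 ^ k

/-- `Q_ω`: space-time frequencies whose spatial direction lies in `ω ⊆ S²`. -/
def Qcap (ω : Set Sp3) : Set (Sp3 × ℝ) := {p | p.1 ≠ 0 ∧ ‖p.1‖⁻¹ • p.1 ∈ ω}

/-- Angular separation of two subsets of the sphere. -/
def angSep (ω₁ ω₂ : Set Sp3) : ℝ :=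
  sInf {θ : ℝ | ∃ x ∈ ω₁, ∃ y ∈ ω₂, θ = InnerProductGeometry.angle x y}

/-- The trilinear convolution form `I(f,g₁,g₂)`. -/
def trI (f g₁ g₂ : Sp3 × ℝ → ℂ) : ℂ :=
  ∫ q : (Sp3 × ℝ) × (Sp3 × ℝ), f (q.1.1 + q.2.1, q.1.2 + q.2.2) * g₁ q.1 * g₂ q.2


lemma abs_le_jb (x : ℝ) : |x| ≤ jb x := by
  rw [jb, ← Real.sqrt_sq_eq_abs]
  exact Real.sqrt_le_sqrt (by nlinarith)

lemma cos_diff_aux {a b m : ℝ} (hb0 : 0 ≤ b) (hba : b ≤ a) (ha : a ≤ π)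
    (hca : |Real.cos a| ≤ m) (hcb : |Real.cos b| ≤ m) :
    2 / π * Real.sqrt (1 - m ^ 2) * (a - b) ≤ Real.cos b - Real.cos a := by
  have hpi := Real.pi_pos
  have hmid0 : 0 ≤ (a + b) / 2 := by linarith
  have hmidpi : (a + b) / 2 ≤ π := by linarith
  have hm1 : Real.cos ((a + b) / 2) ≤ Real.cos b :=
    Real.cos_le_cos_of_nonneg_of_le_pi hb0 hmidpi (by linarith)
  have hm2 : Real.cos a ≤ Real.cos ((a + b) / 2) :=
    Real.cos_le_cos_of_nonneg_of_le_pi hmid0 ha (by linarith)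
  have habs : |Real.cos ((a + b) / 2)| ≤ m := by
    rw [abs_le] at hca hcb ⊢
    exact ⟨by linarith [hca.1], by linarith [hcb.2]⟩
  have hsin_mid : Real.sqrt (1 - m ^ 2) ≤ Real.sin ((a + b) / 2) := by
    rw [Real.sin_eq_sqrt_one_sub_cos_sq hmid0 hmidpi]
    apply Real.sqrt_le_sqrt
    have h := abs_le.mp habs
    nlinarith
  have hsin_half : 2 / π * ((a - b) / 2) ≤ Real.sin ((a - b) / 2) :=
    Real.mul_le_sin (by linarith) (by linarith)
  have hid : Real.cos b - Real.cos a = 2 * Real.sin ((a + b) / 2) * Real.sin ((a - b) / 2) := by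
    rw [show Real.cos b - Real.cos a = -(Real.cos a - Real.cos b) by ring, Real.cos_sub_cos]
    ring
  have h1 : (0:ℝ) ≤ Real.sqrt (1 - m ^ 2) := Real.sqrt_nonneg _
  have h2 : (0:ℝ) ≤ 2 / π * ((a - b) / 2) := mul_nonneg (by positivity) (by linarith)
  have key : 2 * Real.sqrt (1 - m ^ 2) * (2 / π * ((a - b) / 2)) ≤
      2 * Real.sin ((a + b) / 2) * Real.sin ((a - b) / 2) := by
    have := mul_le_mul hsin_mid hsin_half h2 (le_trans h1 hsin_mid)
    nlinarith
  calc 2 / π * Real.sqrt (1 - m ^ 2) * (a - b)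
      = 2 * Real.sqrt (1 - m ^ 2) * (2 / π * ((a - b) / 2)) := by ring
    _ ≤ 2 * Real.sin ((a + b) / 2) * Real.sin ((a - b) / 2) := key
    _ = Real.cos b - Real.cos a := hid.symm

lemma cos_diff_lower {a b m : ℝ} (ha0 : 0 ≤ a) (ha : a ≤ π) (hb0 : 0 ≤ b) (hb : b ≤ π)
    (hca : |Real.cos a| ≤ m) (hcb : |Real.cos b| ≤ m) :
    2 / π * Real.sqrt (1 - m ^ 2) * |a - b| ≤ |Real.cos a - Real.cos b| := by
  rcases le_total b a with h | h
  · have h1 := cos_diff_aux hb0 h ha hca hcb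
    have h2 : Real.cos a ≤ Real.cos b := Real.cos_le_cos_of_nonneg_of_le_pi hb0 ha h
    rw [abs_of_nonneg (by linarith : (0:ℝ) ≤ a - b), abs_sub_comm,
      abs_of_nonneg (by linarith : (0:ℝ) ≤ Real.cos b - Real.cos a)]
    exact h1
  · have h1 := cos_diff_aux ha0 h hb hcb hca
    have h2 : Real.cos b ≤ Real.cos a := Real.cos_le_cos_of_nonneg_of_le_pi ha0 hb h
    rw [abs_sub_comm, abs_of_nonneg (by linarith : (0:ℝ) ≤ b - a),
      abs_of_nonneg (by linarith : (0:ℝ) ≤ Real.cos a - Real.cos b)]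
    exact h1


lemma helper_div_sq {s N₁ N₂ : ℝ} (hs0 : 0 < s) (h : s^2*N₂ ≤ 16*N₁) :
    N₂ ≤ (4/s)^2 * N₁ := by
  rw [show (4/s)^2*N₁ = 16*N₁/s^2 by rw [div_pow]; ring, le_div_iff₀ (by positivity)]
  linarith

lemma helper_key {s B A N₀ N₁ r r₁ : ℝ} (hs0 : 0 < s) (hs1 : s ≤ 1) (hB : 0 < B)
    (hA : 0 < A) (hN₀ : 0 < N₀) (hN₁ : 0 < N₁)
    (hAN₁ : (s*s)*(A*N₀) ≤ 2^7*N₁) (hABs : (2:ℝ)^5 ≤ A*B*s)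
    (hr : r ≤ 2*N₀) (hr₁ : N₁/2 ≤ r₁) : r*s ≤ 16*B*r₁ := by
  have key1 : (s*s)*(2^5*N₀) ≤ 2^7*B*s*N₁ := by
    have m1 := mul_le_mul_of_nonneg_left hAN₁ (by positivity : (0:ℝ) ≤ B*s)
    have m2 := mul_le_mul_of_nonneg_left (mul_le_mul_of_nonneg_right hABs hN₀.le)
      (by positivity : (0:ℝ) ≤ s*s)
    nlinarith [m1, m2]
  have key2 : s * N₀ ≤ 4 * B * N₁ := by nlinarith [key1, hs0, hN₀, hB, hN₁]
  have m1 := mul_le_mul_of_nonneg_right hr hs0.le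
  have m2 := mul_le_mul_of_nonneg_left hr₁ (by positivity : (0:ℝ) ≤ 16*B)
  nlinarith [m1, m2, key2]

lemma helper_sq_le {a b r : ℝ} (h1 : a ≤ r + b) (h2 : b ≤ r + a) (hr : 0 ≤ r) :
    (a-b)^2 ≤ r^2 := by nlinarith

lemma helper_X {X s B r r₁ : ℝ} (hX : 0 ≤ X) (hs0 : 0 < s) (hs1 : s ≤ 1) (hB : 0 ≤ B)
    (hr : 0 < r) (hr₁ : 0 < r₁) (hE : X*(2*r*r₁) ≤ 2*r₁*(B*r)+r^2)
    (hrr : r*s ≤ 16*B*r₁) : X ≤ 9*B/s := by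
  have h2rr : (0:ℝ) < 2*r*r₁ := by positivity
  have hXs : (X * s) * (2*r*r₁) ≤ (9*B) * (2*r*r₁) := by
    have m1 := mul_le_mul_of_nonneg_right hE hs0.le
    have m2 := mul_le_mul_of_nonneg_right hrr hr.le
    nlinarith [m1, m2, mul_nonneg (mul_nonneg hB hr.le) hr₁.le]
  exact (le_div_iff₀ hs0).mpr (le_of_mul_le_mul_right hXs h2rr)

lemma helper_small {s B c : ℝ} (hs0 : 0 < s) (hs2 : s^2 = 1-c) (hBs : B ≤ s^3/2^15) :
    9*B/s ≤ (1-c)/2 := by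
  rw [div_le_iff₀ hs0, ← hs2]
  nlinarith [pow_nonneg hs0.le 3, hs0]

lemma helper_sqm {s c : ℝ} (hc0 : 0 < c) (hc1 : c < 1) (hs2 : s^2 = 1-c) (hs0 : 0 < s) :
    s/2 ≤ Real.sqrt (1 - ((1+c)/2)^2) := by
  have h : (s/2)^2 ≤ 1 - ((1+c)/2)^2 := by nlinarith
  calc s/2 = Real.sqrt ((s/2)^2) := (Real.sqrt_sq (by positivity)).symm
    _ ≤ _ := Real.sqrt_le_sqrt h

set_option maxHeartbeats 2000000 in
/-- Resonance lower bound away from the characteristic angles (Lemma 3.2). -/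
theorem resonance_away_from_characteristic_angles (c : ℝ) (hc0 : 0 < c) (hc1 : c < 1) :
    ∃ c' : ℝ, 0 < c' ∧
      ∀ (ξ₁ ξ₂ : Sp3) (τ₁ τ₂ : ℝ) (N₀ N₁ N₂ A : ℝ),
        ξ₁ ≠ 0 → ξ₁ + ξ₂ ≠ 0 → 1 ≤ N₀ → 1 ≤ N₁ → 1 ≤ N₂ →
        ‖ξ₁ + ξ₂‖ ≤ 2 * N₀ → N₁ / 2 ≤ ‖ξ₁‖ → (1 - c) / (8 * (1 + c)) * N₂ ≤ N₁ →
        2 ^ 20 * ((1 - c) ^ 2)⁻¹ < A →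
        A ≤ 2 ^ 5 * (1 - c) ^ (-(1 / 2) : ℝ) * (N₁ * N₂) ^ (1 / 2 : ℝ) / N₀ →
        2 ^ 10 * (1 - c)⁻¹ * A ^ (-(3 / 4) : ℝ) <
          |InnerProductGeometry.angle (ξ₁ + ξ₂) ξ₁ - Real.arccos c| →
        2 ^ 10 * (1 - c)⁻¹ * A ^ (-(3 / 4) : ℝ) <
          |InnerProductGeometry.angle (ξ₁ + ξ₂) ξ₁ - Real.arccos (-c)| →
        ∀ σ : ℝ, (σ = 1 ∨ σ = -1) →
          c' * A ^ (-(3 / 4) : ℝ) * ‖ξ₁ + ξ₂‖ ≤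
            max (jb (τ₁ + τ₂ + σ * c * ‖ξ₁ + ξ₂‖))
              (max (jb (τ₁ - ‖ξ₁‖)) (jb (τ₂ + ‖ξ₂‖))) := by
  have h1c : (0:ℝ) < 1 - c := by linarith
  refine ⟨1/3, by norm_num, ?_⟩
  intro ξ₁ ξ₂ τ₁ τ₂ N₀ N₁ N₂ A hξ₁ hξ hN₀ hN₁ hN₂ hξN₀ hξ₁N₁ hN₁₂ hAlow hAhigh hang1 hang2 σ hσ
  set s : ℝ := Real.sqrt (1 - c) with hs_def
  have hs0 : 0 < s := Real.sqrt_pos.mpr h1c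
  have hs2 : s ^ 2 = 1 - c := Real.sq_sqrt h1c.le
  have hss : s * s = 1 - c := by nlinarith
  have hs1 : s ≤ 1 := by nlinarith
  have hA0 : (0:ℝ) < A := lt_trans (by positivity) hAlow
  set B : ℝ := A ^ (-(3 / 4) : ℝ) with hB_def
  have hBpos : 0 < B := Real.rpow_pos_of_pos hA0 _
  -- rpow facts
  have hA34 : (2:ℝ) ^ 15 / s ^ 3 ≤ A ^ ((3/4 : ℝ)) := by
    have h4 : (A ^ ((3/4 : ℝ))) ^ (4:ℕ) = A ^ (3:ℕ) := by
      rw [← Real.rpow_natCast (A ^ ((3/4:ℝ))) 4, ← Real.rpow_mul hA0.le,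
        ← Real.rpow_natCast A 3]
      norm_num
    refine le_of_pow_le_pow_left₀ (n := 4) (by norm_num) (Real.rpow_nonneg hA0.le _) ?_
    rw [h4]
    have hL : (2:ℝ)^20 * ((1-c)^2)⁻¹ ≤ A := hAlow.le
    have hL0 : (0:ℝ) ≤ 2^20 * ((1-c)^2)⁻¹ := by positivity
    have h3 : ((2:ℝ)^20 * ((1-c)^2)⁻¹)^(3:ℕ) ≤ A^(3:ℕ) := pow_le_pow_left₀ hL0 hL 3
    have heq : ((2:ℝ)^15 / s^3)^(4:ℕ) = ((2:ℝ)^20 * ((1-c)^2)⁻¹)^(3:ℕ) := by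
      rw [div_pow, ← hs2]
      field_simp
    rw [heq]; exact h3
  have hA14 : (2:ℝ) ^ 5 / s ≤ A ^ ((1/4 : ℝ)) := by
    have h4 : (A ^ ((1/4 : ℝ))) ^ (4:ℕ) = A := by
      rw [← Real.rpow_natCast (A ^ ((1/4:ℝ))) 4, ← Real.rpow_mul hA0.le]
      norm_num
    refine le_of_pow_le_pow_left₀ (n := 4) (by norm_num) (Real.rpow_nonneg hA0.le _) ?_
    rw [h4]
    have heq : ((2:ℝ)^5 / s)^(4:ℕ) = (2:ℝ)^20 * ((1-c)^2)⁻¹ := by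
      rw [div_pow, ← hs2]
      field_simp
    rw [heq]; exact hAlow.le
  have hBs : B ≤ s ^ 3 / 2 ^ 15 := by
    have h1 : B = (A ^ ((3/4:ℝ)))⁻¹ := by
      rw [hB_def, ← Real.rpow_neg hA0.le]
    rw [h1]
    rw [inv_le_comm₀ (by positivity) (by positivity)]
    calc (s^3/2^15)⁻¹ = 2^15 / s^3 := by rw [inv_div]
      _ ≤ A ^ ((3/4:ℝ)) := hA34
  have hAB : (2:ℝ)^5 / s ≤ A * B := by
    have h : A * B = A ^ ((1/4:ℝ)) := by
      rw [hB_def]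
      nth_rewrite 1 [show A = A ^ ((1:ℝ)) from (Real.rpow_one A).symm]
      rw [← Real.rpow_add hA0]
      norm_num
    rw [h]; exact hA14
  -- main body continues
  have hABs : (2:ℝ)^5 ≤ A * B * s := by
    have := (div_le_iff₀ hs0).mp hAB
    linarith
  -- norms
  set r : ℝ := ‖ξ₁ + ξ₂‖ with hr_def
  set r₁ : ℝ := ‖ξ₁‖ with hr₁_def
  set r₂ : ℝ := ‖ξ₂‖ with hr₂_def
  have hr0 : 0 < r := by rw [hr_def]; exact norm_pos_iff.mpr hξ
  have hr₁0 : 0 < r₁ := by rw [hr₁_def]; exact norm_pos_iff.mpr hξ₁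
  have hr₂0 : 0 ≤ r₂ := by rw [hr₂_def]; exact norm_nonneg _
  have hN₀0 : (0:ℝ) < N₀ := by linarith
  have hN₁0 : (0:ℝ) < N₁ := by linarith
  have hN₂0 : (0:ℝ) < N₂ := by linarith
  -- convert hAhigh
  have hrpow1 : (1 - c) ^ (-(1 / 2) : ℝ) = s⁻¹ := by
    rw [Real.rpow_neg h1c.le, ← Real.sqrt_eq_rpow]
  have hrpow2 : (N₁ * N₂) ^ ((1 / 2) : ℝ) = Real.sqrt N₁ * Real.sqrt N₂ := by
    rw [← Real.sqrt_eq_rpow, Real.sqrt_mul (by positivity)]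
  rw [hrpow1, hrpow2] at hAhigh
  have hAN : A * N₀ ≤ 2^5 * s⁻¹ * (Real.sqrt N₁ * Real.sqrt N₂) := (le_div_iff₀ hN₀0).mp hAhigh
  have hsN₂ : Real.sqrt N₂ ≤ 4/s * Real.sqrt N₁ := by
    have h8 : (0:ℝ) < 8*(1+c) := by linarith
    have hN2a : (1-c) * N₂ ≤ N₁ * (8*(1+c)) := by
      rw [div_mul_eq_mul_div] at hN₁₂
      exact (div_le_iff₀ h8).mp hN₁₂
    have hs2N : s^2 * N₂ ≤ 16 * N₁ := by
      rw [hs2]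
      linarith [hN2a, mul_nonneg hN₁0.le h1c.le]
    have hN2b : N₂ ≤ (4/s)^2 * N₁ := helper_div_sq hs0 hs2N
    calc Real.sqrt N₂ ≤ Real.sqrt ((4/s)^2 * N₁) := Real.sqrt_le_sqrt hN2b
      _ = 4/s * Real.sqrt N₁ := by
          rw [Real.sqrt_mul (by positivity), Real.sqrt_sq (by positivity)]
  have hq : Real.sqrt N₁ * Real.sqrt N₁ = N₁ := Real.mul_self_sqrt hN₁0.le
  have hAN₁ : (s*s) * (A * N₀) ≤ 2^7 * N₁ := by
    have h1 : A * N₀ ≤ 2^7*N₁/(s*s) := by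
      refine le_trans hAN ?_
      calc 2^5*s⁻¹*(Real.sqrt N₁*Real.sqrt N₂)
          ≤ 2^5*s⁻¹*(Real.sqrt N₁*(4/s*Real.sqrt N₁)) := by
            apply mul_le_mul_of_nonneg_left _ (by positivity)
            exact mul_le_mul_of_nonneg_left hsN₂ (Real.sqrt_nonneg _)
        _ = 2^7*N₁/(s*s) := by field_simp [hs0.ne']; linear_combination (4:ℝ)*hq
    have h2 := mul_le_mul_of_nonneg_left h1 (le_of_lt (mul_pos hs0 hs0))
    have h3 : (s*s)*(2^7*N₁/(s*s)) = 2^7*N₁ := by field_simp [hs0.ne']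
    linarith only [h2, h3.le, h3.ge]
  have hrr : r * s ≤ 16 * B * r₁ :=
    helper_key hs0 hs1 hBpos hA0 hN₀0 hN₁0 hAN₁ hABs hξN₀ hξ₁N₁
  -- geometry
  set θ : ℝ := InnerProductGeometry.angle (ξ₁ + ξ₂) ξ₁ with hθ_def
  have hθ0 : 0 ≤ θ := InnerProductGeometry.angle_nonneg _ _
  have hθπ : θ ≤ π := InnerProductGeometry.angle_le_pi _ _
  have hinner : Real.cos θ * (r * r₁) = (inner ℝ (ξ₁+ξ₂) ξ₁ : ℝ) :=
    InnerProductGeometry.cos_angle_mul_norm_mul_norm _ _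
  have hξ₂eq : ξ₂ = (ξ₁ + ξ₂) - ξ₁ := by abel
  have hr₂sq : r₂^2 = r^2 - 2*(inner ℝ (ξ₁+ξ₂) ξ₁ : ℝ) + r₁^2 := by
    have h := norm_sub_sq_real (ξ₁+ξ₂) ξ₁
    rw [show ξ₁ + ξ₂ - ξ₁ = ξ₂ from by abel] at h
    exact h
  have hident : Real.cos θ * (2*r*r₁) = r^2 + r₁^2 - r₂^2 := by linarith only [hinner, hr₂sq]
  -- contradiction setup
  by_contra hcon
  push_neg at hcon
  have h1 : |τ₁ + τ₂ + σ*c*r| < 1/3*B*r :=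
    lt_of_le_of_lt (le_trans (abs_le_jb _) (le_max_left _ _)) hcon
  have h2 : |τ₁ - r₁| < 1/3*B*r :=
    lt_of_le_of_lt (le_trans (abs_le_jb _) (le_trans (le_max_left _ _) (le_max_right _ _))) hcon
  have h3 : |τ₂ + r₂| < 1/3*B*r :=
    lt_of_le_of_lt (le_trans (abs_le_jb _) (le_trans (le_max_right _ _) (le_max_right _ _))) hcon
  have hres : |σ*c*r + (r₁ - r₂)| < B*r := by
    have b1 := abs_lt.mp h1
    have b2 := abs_lt.mp h2
    have b3 := abs_lt.mp h3
    exact abs_lt.mpr ⟨by linarith only [b1.1, b2.2, b3.2], by linarith only [b1.2, b2.1, b3.1]⟩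
  -- triangle inequalities
  have htri1 : r₁ ≤ r + r₂ := by
    have h := norm_sub_le (ξ₁+ξ₂) ξ₂
    rw [show (ξ₁+ξ₂) - ξ₂ = ξ₁ from by abel] at h
    exact h
  have htri2 : r₂ ≤ r + r₁ := by
    have h := norm_sub_le (ξ₁+ξ₂) ξ₁
    rw [show (ξ₁+ξ₂) - ξ₁ = ξ₂ from by abel] at h
    exact h
  -- bound |cos θ + σ c|
  have hEeq : (Real.cos θ + σ*c) * (2*r*r₁)
      = 2*r₁*(σ*c*r + (r₁ - r₂)) + (r^2 - (r₁-r₂)^2) := by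
    linear_combination hident
  have hu2 : (r₁ - r₂)^2 ≤ r^2 := helper_sq_le htri1 htri2 hr0.le
  have hEbound : |Real.cos θ + σ*c| * (2*r*r₁) ≤ 2*r₁*(B*r) + r^2 := by
    have h2rr : (0:ℝ) < 2*r*r₁ := by positivity
    have habs : |Real.cos θ + σ*c| * (2*r*r₁) = |(Real.cos θ + σ*c) * (2*r*r₁)| := by
      rw [abs_mul, abs_of_pos h2rr]
    rw [habs, hEeq]
    calc |2*r₁*(σ*c*r + (r₁-r₂)) + (r^2 - (r₁-r₂)^2)|
        ≤ |2*r₁*(σ*c*r + (r₁-r₂))| + |r^2 - (r₁-r₂)^2| := abs_add_le _ _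
      _ ≤ 2*r₁*(B*r) + r^2 := by
          have e1 : |2*r₁*(σ*c*r+(r₁-r₂))| = 2*r₁*|σ*c*r+(r₁-r₂)| := by
            rw [abs_mul, abs_of_pos (by positivity : (0:ℝ) < 2*r₁)]
          have e2 : |r^2 - (r₁-r₂)^2| ≤ r^2 :=
            abs_le.mpr ⟨by linarith only [hu2, sq_nonneg r], by linarith only [sq_nonneg (r₁-r₂)]⟩
          rw [e1]
          have e3 := mul_le_mul_of_nonneg_left hres.le (by positivity : (0:ℝ) ≤ 2*r₁)
          linarith only [e2, e3]
  have hts : |Real.cos θ + σ*c| ≤ 9*B/s :=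
    helper_X (abs_nonneg _) hs0 hs1 hBpos.le hr0 hr₁0 hEbound hrr
  -- the characteristic angle for this σ
  obtain ⟨θ₀, hθ₀cos, hθ₀0, hθ₀π, hangθ₀⟩ :
      ∃ θ₀, Real.cos θ₀ = -(σ*c) ∧ 0 ≤ θ₀ ∧ θ₀ ≤ π ∧ 2^10*(1-c)⁻¹*B < |θ - θ₀| := by
    rcases hσ with rfl | rfl
    · exact ⟨Real.arccos (-c), by rw [Real.cos_arccos (by linarith) (by linarith)]; ring,
        Real.arccos_nonneg _, Real.arccos_le_pi _, hang2⟩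
    · exact ⟨Real.arccos c, by rw [Real.cos_arccos (by linarith) (by linarith)]; ring,
        Real.arccos_nonneg _, Real.arccos_le_pi _, hang1⟩
  have hcθ₀c : |Real.cos θ₀| = c := by
    rw [hθ₀cos]
    rcases hσ with rfl | rfl <;> simp [abs_of_nonneg hc0.le]
  have hdist : |Real.cos θ - Real.cos θ₀| ≤ 9*B/s := by
    rw [hθ₀cos, sub_neg_eq_add]; exact hts
  have hsmall : 9*B/s ≤ (1-c)/2 := helper_small hs0 hs2 hBs
  have htabs : |Real.cos θ| ≤ (1+c)/2 := by
    have h := abs_sub_abs_le_abs_sub (Real.cos θ) (Real.cos θ₀)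
    linarith only [hcθ₀c.le, hcθ₀c.ge, hdist, hsmall, h, hc1]
  have hcθ₀le : |Real.cos θ₀| ≤ (1+c)/2 := by rw [hcθ₀c]; linarith only [hc1]
  have hsqm : s/2 ≤ Real.sqrt (1 - ((1+c)/2)^2) := helper_sqm hc0 hc1 hs2 hs0
  have hcd := cos_diff_lower hθ0 hθπ hθ₀0 hθ₀π htabs hcθ₀le
  have hX0 : 0 ≤ |θ - θ₀| := abs_nonneg _
  have t1 : 2/π*(s/2)*|θ-θ₀| ≤ 9*B/s := by
    refine le_trans ?_ (le_trans hcd hdist)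
    apply mul_le_mul_of_nonneg_right _ hX0
    exact mul_le_mul_of_nonneg_left hsqm (by positivity)
  have hpi := Real.pi_pos
  have t2 : (s*|θ-θ₀|)*s ≤ (9*B)*π := by
    have e : 2/π*(s/2)*|θ-θ₀| = (s*|θ-θ₀|)/π := by ring
    rw [e] at t1
    exact (div_le_div_iff₀ hpi hs0).mp t1
  have t3 : 2^10*B < (s*|θ-θ₀|)*s := by
    have h := mul_lt_mul_of_pos_right (mul_lt_mul_of_pos_left hangθ₀ hs0) hs0
    have e : s*(2^10*(1-c)⁻¹*B)*s = 2^10*B := by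
      rw [show s*(2^10*(1-c)⁻¹*B)*s = (s*s)*(1-c)⁻¹*(2^10*B) by ring, hss,
        mul_inv_cancel₀ (ne_of_gt h1c), one_mul]
    calc (2:ℝ)^10*B = s*(2^10*(1-c)⁻¹*B)*s := e.symm
      _ < (s*|θ-θ₀|)*s := h
  have t4 : (9*B)*π ≤ (9*B)*4 :=
    mul_le_mul_of_nonneg_left Real.pi_le_four (by positivity : (0:ℝ) ≤ 9*B)
  linarith only [t2, t3, t4, hBpos]
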